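/- There is no surjective map f : [0,1] → [0,1]² that is Hölder continuous with exponent r > 1/2. Equivalently, a space-filling curve onto the unit square cannot have Hölder exponent exceeding 1/2. -/

import Mathlib

open Set Metric Filter Topology
open scoped NNReal ENNReal

noncomputable def sqCenter : EuclideanSpace ℝ (Fin 2) := WithLp.toLp 2 (fun _ => 1/2)

lemma aux_ball_subset_square :
    Metric.ball sqCenter (1/2) ⊆
      {p : EuclideanSpace ℝ (Fin 2) | ∀ i, p i ∈ Set.Icc (0 : ℝ) 1} := by
  intro p hp i
  rw [mem_ball, EuclideanSpace.dist_eq] at hp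
  have h1 : dist (p i) (sqCenter i) ≤ Real.sqrt (∑ j, dist (p j) (sqCenter j) ^ 2) := by
    rw [← Real.sqrt_sq (dist_nonneg (x := p i) (y := sqCenter i))]
    exact Real.sqrt_le_sqrt
      (Finset.single_le_sum (f := fun j => dist (p j) (sqCenter j) ^ 2)
        (fun j _ => sq_nonneg _) (Finset.mem_univ i))
  have h3 : |p i - 1/2| < 1/2 := by
    simpa [sqCenter, Real.dist_eq] using lt_of_le_of_lt h1 hp
  constructor
  · linarith [(abs_lt.mp h3).1]
  · linarith [(abs_lt.mp h3).2]

lemma aux_dimH_square :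
    dimH {p : EuclideanSpace ℝ (Fin 2) | ∀ i, p i ∈ Set.Icc (0 : ℝ) 1} = 2 := by
  have hmem : {p : EuclideanSpace ℝ (Fin 2) | ∀ i, p i ∈ Set.Icc (0 : ℝ) 1}
      ∈ 𝓝 sqCenter :=
    Filter.mem_of_superset (Metric.ball_mem_nhds sqCenter (by norm_num : (0:ℝ) < 1/2))
      aux_ball_subset_square
  have h2 : (Module.finrank ℝ (EuclideanSpace ℝ (Fin 2)) : ℝ≥0∞) = 2 := by simp
  exact (Real.dimH_of_mem_nhds (E := EuclideanSpace ℝ (Fin 2)) hmem).trans h2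

/-- no map `f : [0,1] → ℝ²` that is Hölder continuous with
exponent `r > 1/2` can map `[0,1]` onto the unit square: a space-filling
curve cannot have Hölder exponent exceeding `1/2`. -/
theorem no_holder_space_filling_curve (r : ℝ) (hr : 1 / 2 < r)
    (f : ℝ → EuclideanSpace ℝ (Fin 2)) (C : ℝ)
    (hf : ∀ x ∈ Set.Icc (0 : ℝ) 1, ∀ y ∈ Set.Icc (0 : ℝ) 1,
      ‖f x - f y‖ ≤ C * |x - y| ^ r) :
    f '' Set.Icc (0 : ℝ) 1 ≠
      {p : EuclideanSpace ℝ (Fin 2) | ∀ i, p i ∈ Set.Icc (0 : ℝ) 1} := by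
  intro h
  have hr0 : (0:ℝ) < r := by linarith
  set r' : ℝ≥0 := ⟨r, hr0.le⟩ with hr'
  set C' : ℝ≥0 := Real.toNNReal C with hC'
  have hH : HolderOnWith C' r' f (Set.Icc 0 1) := by
    intro x hx y hy
    rw [edist_dist, edist_dist, dist_eq_norm]
    calc ENNReal.ofReal ‖f x - f y‖ ≤ ENNReal.ofReal ((C' : ℝ) * |x - y| ^ r) := by
          apply ENNReal.ofReal_le_ofReal
          calc ‖f x - f y‖ ≤ C * |x - y| ^ r := hf x hx y hy
            _ ≤ (C' : ℝ) * |x - y| ^ r := by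
                gcongr
                rw [hC', Real.coe_toNNReal']
                exact le_max_left _ _
      _ = (C' : ℝ≥0∞) * ENNReal.ofReal (|x - y| ^ r) := by
          rw [ENNReal.ofReal_mul C'.coe_nonneg, ENNReal.ofReal_coe_nnreal]
      _ = (C' : ℝ≥0∞) * ENNReal.ofReal (dist x y) ^ (r' : ℝ) := by
          rw [Real.dist_eq, ← ENNReal.ofReal_rpow_of_nonneg (abs_nonneg _) hr0.le]
          rfl
  have hdim1 : dimH (Set.Icc (0:ℝ) 1) = 1 := by
    rw [Real.dimH_of_mem_nhds (x := (1/2 : ℝ)) (Icc_mem_nhds (by norm_num) (by norm_num))]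
    simp
  have hle := hH.dimH_image_le (show 0 < r' by exact_mod_cast hr0)
  rw [hdim1, h] at hle
  have hle2 : (2 : ℝ≥0∞) ≤ 1 / r' := aux_dimH_square ▸ hle
  have hrlt : (1 : ℝ≥0∞) / r' < 2 := by
    rw [ENNReal.div_lt_iff
      (Or.inl (ne_of_gt (ENNReal.coe_pos.mpr (show (0:ℝ≥0) < r' from by exact_mod_cast hr0))))
      (Or.inl ENNReal.coe_ne_top)]
    rw [show ((2:ℝ≥0∞) * r') = ((2 * r' : ℝ≥0) : ℝ≥0∞) by push_cast; ring]
    exact_mod_cast (show (1:ℝ≥0) < 2 * r' by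
      rw [← NNReal.coe_lt_coe]; push_cast; simp [hr']; exact (show (1:ℝ) < 2 * r by linarith))
  exact lt_irrefl _ (lt_of_le_of_lt hle2 hrlt)
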